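/- Let U ⊆ ℂ be open, g : U → ℂ holomorphic, η : U → ℂ holomorphic, and let c_τ : [0,1] → U for τ ∈ (0,1] be a family of piecewise smooth paths converging uniformly (together with derivatives, in the piecewise sense) to a path c : [0,1] → ℂ with c((0,1)) ⊆ U and endpoints c(0), c(1) possibly on the boundary ∂U. If η(c_τ(i)) e^(g(c_τ(i))) → 0 as τ → 0 for each endpoint i ∈ {0,1} at which c(i) ∈ ∂U, and the integrals ∫_{c_τ} (∇η) e^g converge to ∫_c (∇η) e^g, then ∫_c (∇η) e^g equals the sum over endpoints c(i) ∈ U of (−1)^(i+1) η(c(i)) e^(g(c(i))). -/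

import Mathlib

open Set Filter

/-- The limit Stokes formula in dimension one: if the paths `c_τ` inside `U` converge
to a path `c` whose endpoints may lie on the boundary of `U`, and `η e^g` tends to `0`
along the endpoints lying on the boundary, then the limit of the twisted integrals
`∫_{c_τ} (∇η) e^g` equals the boundary terms taken only at the endpoints inside `U`. -/
theorem stmt5 (U : Set ℂ) (hU : IsOpen U) (g η : ℂ → ℂ)
    (hg : DifferentiableOn ℂ g U) (hη : DifferentiableOn ℂ η U)
    (c : ℝ → ℂ) (hcU : ∀ t ∈ Ioo (0:ℝ) 1, c t ∈ U)
    (cτ cτ' : ℝ → ℝ → ℂ)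
    (hτU : ∀ τ ∈ Ioc (0:ℝ) 1, ∀ t ∈ Icc (0:ℝ) 1, cτ τ t ∈ U)
    (hτderiv : ∀ τ ∈ Ioc (0:ℝ) 1, ∀ t ∈ Icc (0:ℝ) 1, HasDerivAt (cτ τ) (cτ' τ t) t)
    (hτcont : ∀ τ ∈ Ioc (0:ℝ) 1, ContinuousOn (cτ' τ) (Icc 0 1))
    (hunif : TendstoUniformlyOn (fun τ => cτ τ) c (nhdsWithin 0 (Ioc 0 1)) (Icc 0 1))
    (hend : ∀ i ∈ ({0, 1} : Set ℝ),
      Tendsto (fun τ => cτ τ i) (nhdsWithin 0 (Ioc 0 1)) (nhds (c i)))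
    (hin : ∀ i ∈ ({0, 1} : Set ℝ), c i ∈ U ∨ c i ∈ frontier U)
    (hvanish : ∀ i ∈ ({0, 1} : Set ℝ), c i ∈ frontier U →
      Tendsto (fun τ => η (cτ τ i) * Complex.exp (g (cτ τ i)))
        (nhdsWithin 0 (Ioc 0 1)) (nhds 0))
    (L : ℂ)
    (hlim : Tendsto (fun τ => ∫ t in (0:ℝ)..1,
        (deriv η (cτ τ t) + deriv g (cτ τ t) * η (cτ τ t)) *
          Complex.exp (g (cτ τ t)) * cτ' τ t)
      (nhdsWithin 0 (Ioc 0 1)) (nhds L)) :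
    L = Set.indicator U (fun z => η z * Complex.exp (g z)) (c 1)
      - Set.indicator U (fun z => η z * Complex.exp (g z)) (c 0) := by

  -- For each τ ∈ (0,1], FTC gives the integral as a difference of boundary values.
  have key : ∀ τ ∈ Ioc (0:ℝ) 1, (∫ t in (0:ℝ)..1,
      (deriv η (cτ τ t) + deriv g (cτ τ t) * η (cτ τ t)) *
        Complex.exp (g (cτ τ t)) * cτ' τ t)
      = η (cτ τ 1) * Complex.exp (g (cτ τ 1)) - η (cτ τ 0) * Complex.exp (g (cτ τ 0)) := by
    intro τ hτ
    have hIcc : uIcc (0:ℝ) 1 = Icc 0 1 := uIcc_of_le (by norm_num)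
    have hderivF : ∀ t ∈ uIcc (0:ℝ) 1,
        HasDerivAt (fun t => η (cτ τ t) * Complex.exp (g (cτ τ t)))
          ((deriv η (cτ τ t) + deriv g (cτ τ t) * η (cτ τ t)) *
            Complex.exp (g (cτ τ t)) * cτ' τ t) t := by
      intro t ht
      rw [hIcc] at ht
      have hz : cτ τ t ∈ U := hτU τ hτ t ht
      have hc : HasDerivAt (cτ τ) (cτ' τ t) t := hτderiv τ hτ t ht
      have hηz : HasDerivAt η (deriv η (cτ τ t)) (cτ τ t) :=
        (hη.differentiableAt (hU.mem_nhds hz)).hasDerivAt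
      have hgz : HasDerivAt g (deriv g (cτ τ t)) (cτ τ t) :=
        (hg.differentiableAt (hU.mem_nhds hz)).hasDerivAt
      have h1 : HasDerivAt (fun t => η (cτ τ t)) (deriv η (cτ τ t) * cτ' τ t) t :=
        hηz.comp t hc
      have h2 : HasDerivAt (fun t => Complex.exp (g (cτ τ t)))
          (Complex.exp (g (cτ τ t)) * deriv g (cτ τ t) * cτ' τ t) t :=
        (hgz.cexp.comp t hc)
      have : HasDerivAt (fun t => η (cτ τ t) * Complex.exp (g (cτ τ t)))
          (deriv η (cτ τ t) * cτ' τ t * Complex.exp (g (cτ τ t)) +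
            η (cτ τ t) * (Complex.exp (g (cτ τ t)) * deriv g (cτ τ t) * cτ' τ t)) t :=
        h1.fun_mul h2
      convert this using 1
      ring
    have hcτcont : ContinuousOn (cτ τ) (Icc 0 1) := fun t ht =>
      (hτderiv τ hτ t ht).continuousAt.continuousWithinAt
    have hη' : ContinuousOn (deriv η) U := ((hη.analyticOnNhd hU).deriv).continuousOn
    have hg' : ContinuousOn (deriv g) U := ((hg.analyticOnNhd hU).deriv).continuousOn
    have hηc : ContinuousOn η U := hη.continuousOn
    have hgc : ContinuousOn g U := hg.continuousOn
    have hmaps : ∀ t ∈ Icc (0:ℝ) 1, cτ τ t ∈ U := hτU τ hτ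
    have hint : IntervalIntegrable (fun t =>
        (deriv η (cτ τ t) + deriv g (cτ τ t) * η (cτ τ t)) *
          Complex.exp (g (cτ τ t)) * cτ' τ t) MeasureTheory.volume 0 1 := by
      apply ContinuousOn.intervalIntegrable
      rw [hIcc]
      exact (((hη'.comp hcτcont hmaps).add
          ((hg'.comp hcτcont hmaps).mul (hηc.comp hcτcont hmaps))).mul
          (Complex.continuous_exp.comp_continuousOn (hgc.comp hcτcont hmaps))).mul
          (hτcont τ hτ)
    exact intervalIntegral.integral_eq_sub_of_hasDerivAt hderivF hint
  have hNe : (nhdsWithin (0:ℝ) (Ioc 0 1)).NeBot := by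
    refine mem_closure_iff_nhdsWithin_neBot.mp ?_
    rw [closure_Ioc (by norm_num : (0:ℝ) ≠ 1)]
    exact ⟨le_refl 0, by norm_num⟩
  have hA : ∀ i ∈ ({0, 1} : Set ℝ),
      Tendsto (fun τ => η (cτ τ i) * Complex.exp (g (cτ τ i)))
        (nhdsWithin 0 (Ioc 0 1))
        (nhds (Set.indicator U (fun z => η z * Complex.exp (g z)) (c i))) := by
    intro i hi
    rcases hin i hi with h | h
    · rw [indicator_of_mem h]
      have hcont : ContinuousAt (fun z => η z * Complex.exp (g z)) (c i) :=
        ((hη.differentiableAt (hU.mem_nhds h)).continuousAt).mul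
          (Complex.continuous_exp.continuousAt.comp
            ((hg.differentiableAt (hU.mem_nhds h)).continuousAt))
      exact hcont.tendsto.comp (hend i hi)
    · have hnot : c i ∉ U := by
        rw [hU.frontier_eq] at h
        exact h.2
      rw [indicator_of_notMem hnot]
      exact hvanish i hi h
  have h0 : (0:ℝ) ∈ ({0, 1} : Set ℝ) := by norm_num
  have h1 : (1:ℝ) ∈ ({0, 1} : Set ℝ) := by norm_num
  have h2 : Tendsto (fun τ => ∫ t in (0:ℝ)..1,
      (deriv η (cτ τ t) + deriv g (cτ τ t) * η (cτ τ t)) *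
        Complex.exp (g (cτ τ t)) * cτ' τ t)
      (nhdsWithin 0 (Ioc 0 1))
      (nhds (Set.indicator U (fun z => η z * Complex.exp (g z)) (c 1)
        - Set.indicator U (fun z => η z * Complex.exp (g z)) (c 0))) := by
    refine ((hA 1 h1).sub (hA 0 h0)).congr' ?_
    filter_upwards [self_mem_nhdsWithin] with τ hτ
    exact (key τ hτ).symm
  exact tendsto_nhds_unique hlim h2
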